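/- arXiv:1705.04408 — 3 statements merged into one kernel-verified Lean document; each statement's English description precedes it below -/
import Mathlib

section
/- Let ρ < 0 and let W : (0,∞) → (0,∞) be regularly varying at infinity with index ρ-1 and integrable on [1,∞). Then ∫ₓ^∞ W(u) du ∼ (1/|ρ|) x W(x) as x → ∞. -/
set_option maxHeartbeats 1000000

open Filter Set MeasureTheory Real ENNReal



/-- Image of a null subset of `[1,∞)` under `log` (shifted) is null. -/
lemma stmt2_log_null {N : Set ℝ} (hN : volume N = 0) (s : ℝ) :
    volume ((fun y => Real.log y - s) '' (N ∩ Ici 1)) = 0 := by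
  have hlip : LipschitzOnWith 1 (fun y => Real.log y - s) (Ici (1:ℝ)) := by
    apply LipschitzOnWith.of_dist_le_mul
    intro a ha b hb
    have ha : (1:ℝ) ≤ a := ha
    have hb : (1:ℝ) ≤ b := hb
    simp only [Real.dist_eq, NNReal.coe_one, one_mul, sub_sub_sub_cancel_right]
    rcases le_total b a with hab | hab
    · have hb0 : (0:ℝ) < b := lt_of_lt_of_le one_pos hb
      have ha0 : (0:ℝ) < a := lt_of_lt_of_le one_pos ha
      have h1 : Real.log a - Real.log b = Real.log (a / b) :=
        (Real.log_div ha0.ne' hb0.ne').symm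
      have h2 : Real.log (a / b) ≤ a / b - 1 :=
        Real.log_le_sub_one_of_pos (div_pos ha0 hb0)
      have h3 : a / b - 1 ≤ a - b := by
        rw [div_sub_one hb0.ne']
        calc (a - b) / b ≤ (a - b) / 1 := by
              apply div_le_div_of_nonneg_left <;> linarith
          _ = a - b := div_one _
      have h4 : 0 ≤ Real.log a - Real.log b := by
        have := Real.log_le_log hb0 hab; linarith
      rw [abs_of_nonneg h4, abs_of_nonneg (by linarith : (0:ℝ) ≤ a - b)]
      linarith
    · have hb0 : (0:ℝ) < b := lt_of_lt_of_le one_pos hb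
      have ha0 : (0:ℝ) < a := lt_of_lt_of_le one_pos ha
      have h1 : Real.log b - Real.log a = Real.log (b / a) :=
        (Real.log_div hb0.ne' ha0.ne').symm
      have h2 : Real.log (b / a) ≤ b / a - 1 :=
        Real.log_le_sub_one_of_pos (div_pos hb0 ha0)
      have h3 : b / a - 1 ≤ b - a := by
        rw [div_sub_one ha0.ne']
        calc (b - a) / a ≤ (b - a) / 1 := by
              apply div_le_div_of_nonneg_left <;> linarith
          _ = b - a := div_one _
      have h4 : 0 ≤ Real.log b - Real.log a := by
        have := Real.log_le_log ha0 hab; linarith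
      rw [abs_sub_comm, abs_sub_comm a b, abs_of_nonneg h4,
        abs_of_nonneg (by linarith : (0:ℝ) ≤ b - a)]
      linarith
  have himg := (hlip.mono (inter_subset_right (s := N))).hausdorffMeasure_image_le (d := 1) zero_le_one
  rw [MeasureTheory.hausdorffMeasure_real] at himg
  simp only [ENNReal.coe_one, ENNReal.one_rpow, one_mul] at himg
  refine le_antisymm (himg.trans ?_) zero_le
  exact le_of_le_of_eq (measure_mono inter_subset_left) hN

noncomputable def stmt2h (W : ℝ → ℝ) : ℝ → ℝ := fun s => Real.log (W (Real.exp s))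

lemma stmt2_uct (ρ : ℝ) (W : ℝ → ℝ) (hWpos : ∀ x > 0, 0 < W x)
    (hWrv : ∀ l > 0, Tendsto (fun x => W (l * x) / W x) atTop (nhds (l ^ (ρ - 1))))
    (hWint : IntegrableOn W (Set.Ici 1) volume)
    (hptw : ∀ v : ℝ, Tendsto (fun σ : ℝ => stmt2h W (σ + v) - stmt2h W σ)
      atTop (nhds ((ρ - 1) * v)))
    {ε : ℝ} (hε : 0 < ε) :
    ∃ S : ℝ, 0 ≤ S ∧ ∀ s ≥ S, ∀ u ∈ Icc (0:ℝ) 1,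
      |stmt2h W (s + u) - stmt2h W s - (ρ - 1) * u| ≤ ε := by
  set c := ρ - 1 with hc
  set h : ℝ → ℝ := stmt2h W with hhdef
  by_contra hcon
  push_neg at hcon
  choose s hsge u huIcc hbad using fun n : ℕ => hcon n (Nat.cast_nonneg n)
  -- measurable version of W
  set W₀ := (hWint.aestronglyMeasurable).mk W with hW₀def
  have hW₀m : Measurable W₀ := (hWint.aestronglyMeasurable).measurable_mk
  have haeW : W =ᵐ[volume.restrict (Ici 1)] W₀ := (hWint.aestronglyMeasurable).ae_eq_mk
  set N : Set ℝ := {y | W y ≠ W₀ y} ∩ Ici 1 with hNdef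
  have hNnull : volume N = 0 := by
    have h0 : (volume.restrict (Ici 1)) {y | ¬ W y = W₀ y} = 0 := ae_iff.mp haeW
    rwa [Measure.restrict_apply' measurableSet_Ici] at h0
  -- key: each "good slice" set is null measurable
  have keyNM : ∀ b : ℝ, 0 ≤ b →
      NullMeasurableSet {v | v ∈ Icc (0:ℝ) 2 ∧ |h (b + v) - h b - c * v| < ε/3} volume := by
    intro b hb
    set T := {v | v ∈ Icc (0:ℝ) 2 ∧ |Real.log (W₀ (Real.exp (b + v))) - h b - c * v| < ε/3}
      with hTdef
    have hTm : MeasurableSet T := by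
      apply MeasurableSet.inter
      · exact measurableSet_Icc
      · have hm : Measurable fun v : ℝ =>
            |Real.log (W₀ (Real.exp (b + v))) - h b - c * v| :=
          ((((Real.measurable_log.comp (hW₀m.comp
            (Real.continuous_exp.measurable.comp (measurable_const_add b)))).sub
            measurable_const).sub (measurable_const_mul c)).abs)
        exact hm (measurableSet_Iio (a := ε/3))
    set Z := {v | Real.exp (b + v) ∈ N} with hZdef
    have hZnull : volume Z = 0 := by
      have hsub : Z ⊆ (fun y => Real.log y - b) '' (N ∩ Ici 1) := by
        intro v hv
        refine ⟨Real.exp (b + v), ⟨hv, hv.2⟩, ?_⟩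
        show Real.log (Real.exp (b + v)) - b = v
        rw [Real.log_exp]; ring
      exact measure_mono_null hsub (stmt2_log_null hNnull b)
    have hWeq : ∀ v, v ∈ Icc (0:ℝ) 2 → v ∉ Z → W (Real.exp (b + v)) = W₀ (Real.exp (b + v)) := by
      intro v hv hvZ
      by_contra hne
      exact hvZ ⟨hne, Real.one_le_exp (by linarith [hv.1])⟩
    refine (hTm.nullMeasurableSet).congr ?_
    rw [Filter.eventuallyEq_set]
    refine (measure_mono_null ?_ hZnull : volume {v | ¬ (v ∈ T ↔ v ∈ _)} = 0) |> ae_iff.mpr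
    intro v hv
    simp only [mem_setOf_eq] at hv
    by_contra hvZ
    apply hv
    constructor
    · rintro ⟨hvI, hlt⟩
      refine ⟨hvI, ?_⟩
      simp only [hhdef, stmt2h]
      rwa [← hWeq v hvI hvZ] at hlt
    · rintro ⟨hvI, hlt⟩
      refine ⟨hvI, ?_⟩
      simp only [hhdef, stmt2h] at hlt
      rwa [hWeq v hvI hvZ] at hlt
  -- the two families of sets
  set A : ℕ → Set ℝ := fun n =>
    {v | v ∈ Icc (0:ℝ) 2 ∧ |h (s n + v) - h (s n) - c * v| < ε/3} with hAdef
  set B : ℕ → Set ℝ := fun n =>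
    {v | v ∈ Icc (0:ℝ) 2 ∧ |h ((s n + u n) + v) - h (s n + u n) - c * v| < ε/3} with hBdef
  have hAnm : ∀ n, NullMeasurableSet (A n) volume := fun n =>
    keyNM (s n) (le_trans (Nat.cast_nonneg n) (hsge n))
  have hBnm : ∀ n, NullMeasurableSet (B n) volume := fun n =>
    keyNM (s n + u n) (by
      have := le_trans (Nat.cast_nonneg n) (hsge n)
      have := (huIcc n).1
      linarith)
  set E : ℕ → Set ℝ := fun k => ⋂ (n) (_ : k ≤ n), A n with hEdef
  set F : ℕ → Set ℝ := fun k => ⋂ (n) (_ : k ≤ n), B n with hFdef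
  have hEnm : ∀ k, NullMeasurableSet (E k) volume := fun k =>
    NullMeasurableSet.iInter fun n => NullMeasurableSet.iInter fun _ => hAnm n
  have hFnm : ∀ k, NullMeasurableSet (F k) volume := fun k =>
    NullMeasurableSet.iInter fun n => NullMeasurableSet.iInter fun _ => hBnm n
  have hEmono : Monotone E := by
    intro k1 k2 hk v hv
    simp only [hEdef, mem_iInter] at hv ⊢
    exact fun n hn => hv n (le_trans hk hn)
  have hFmono : Monotone F := by
    intro k1 k2 hk v hv
    simp only [hFdef, mem_iInter] at hv ⊢
    exact fun n hn => hv n (le_trans hk hn)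
  have hstend : Tendsto s atTop atTop :=
    tendsto_atTop_mono hsge tendsto_natCast_atTop_atTop
  have hsutend : Tendsto (fun n => s n + u n) atTop atTop :=
    tendsto_atTop_mono (fun n => by linarith [(huIcc n).1] :
      ∀ n, s n ≤ s n + u n) hstend
  have hEsub : ∀ k, E k ⊆ Icc (0:ℝ) 2 := by
    intro k v hv
    simp only [hEdef, mem_iInter] at hv
    exact (hv k le_rfl).1
  have hFsub : ∀ k, F k ⊆ Icc (0:ℝ) 2 := by
    intro k v hv
    simp only [hFdef, mem_iInter] at hv
    exact (hv k le_rfl).1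
  have hEunion : (⋃ k, E k) = Icc (0:ℝ) 2 := by
    apply Subset.antisymm (iUnion_subset hEsub)
    intro v hv
    have hT : Tendsto (fun n => h (s n + v) - h (s n)) atTop (nhds (c * v)) :=
      (hptw v).comp hstend
    have hev : ∀ᶠ n in atTop, |h (s n + v) - h (s n) - c * v| < ε/3 := by
      have := Metric.tendsto_atTop.mp hT (ε/3) (by linarith)
      obtain ⟨K, hK⟩ := this
      refine eventually_atTop.mpr ⟨K, fun n hn => ?_⟩
      have := hK n hn
      rwa [Real.dist_eq] at this
    obtain ⟨K, hK⟩ := eventually_atTop.mp hev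
    refine mem_iUnion.mpr ⟨K, ?_⟩
    simp only [hEdef, mem_iInter]
    exact fun n hn => ⟨hv, hK n hn⟩
  have hFunion : (⋃ k, F k) = Icc (0:ℝ) 2 := by
    apply Subset.antisymm (iUnion_subset hFsub)
    intro v hv
    have hT : Tendsto (fun n => h ((s n + u n) + v) - h (s n + u n)) atTop (nhds (c * v)) :=
      (hptw v).comp hsutend
    have hev : ∀ᶠ n in atTop, |h ((s n + u n) + v) - h (s n + u n) - c * v| < ε/3 := by
      have := Metric.tendsto_atTop.mp hT (ε/3) (by linarith)
      obtain ⟨K, hK⟩ := this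
      refine eventually_atTop.mpr ⟨K, fun n hn => ?_⟩
      have := hK n hn
      rwa [Real.dist_eq] at this
    obtain ⟨K, hK⟩ := eventually_atTop.mp hev
    refine mem_iUnion.mpr ⟨K, ?_⟩
    simp only [hFdef, mem_iInter]
    exact fun n hn => ⟨hv, hK n hn⟩
  -- find k with both measures > 3/2
  set θ : ℝ≥0∞ := ENNReal.ofReal (3/2) with hθdef
  have hIccvol : volume (Icc (0:ℝ) 2) = ENNReal.ofReal 2 := by
    rw [Real.volume_Icc]; norm_num
  have h32 : θ < volume (Icc (0:ℝ) 2) := by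
    rw [hIccvol, hθdef]
    exact (ENNReal.ofReal_lt_ofReal_iff (by norm_num)).mpr (by norm_num)
  have hEtend : Tendsto (volume ∘ E) atTop (nhds (volume (Icc (0:ℝ) 2))) := by
    have := tendsto_measure_iUnion_atTop (μ := volume) hEmono
    rwa [hEunion] at this
  have hFtend : Tendsto (volume ∘ F) atTop (nhds (volume (Icc (0:ℝ) 2))) := by
    have := tendsto_measure_iUnion_atTop (μ := volume) hFmono
    rwa [hFunion] at this
  obtain ⟨k1, hk1⟩ := (hEtend.eventually (eventually_gt_nhds h32)).exists
  obtain ⟨k2, hk2⟩ := (hFtend.eventually (eventually_gt_nhds h32)).exists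
  set k := max k1 k2 with hkdef
  have hEk : θ < volume (E k) :=
    lt_of_lt_of_le hk1 (measure_mono (hEmono (le_max_left _ _)))
  have hFk : θ < volume (F k) :=
    lt_of_lt_of_le hk2 (measure_mono (hFmono (le_max_right _ _)))
  -- measurable subsets of same measure
  obtain ⟨ME, hMEsub, hMEm, hMEeq⟩ := (hEnm k).exists_measurable_subset_ae_eq
  obtain ⟨MF, hMFsub, hMFm, hMFeq⟩ := (hFnm k).exists_measurable_subset_ae_eq
  have hMEvol : volume ME = volume (E k) := measure_congr hMEeq
  have hMFvol : volume MF = volume (F k) := measure_congr hMFeq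
  set t := u k with htdef
  have ht : t ∈ Icc (0:ℝ) 1 := huIcc k
  set Q := (fun v => v - t) ⁻¹' MF with hQdef
  have hQm : MeasurableSet Q := hMFm.preimage (measurable_id.sub measurable_const)
  have hQvol : volume Q = volume MF := by
    rw [show Q = (fun v => v + (-t)) ⁻¹' MF by ext v; simp [hQdef, sub_eq_add_neg]]
    exact measure_preimage_add_right volume (-t) MF
  -- nonempty intersection
  have hsub3 : ME ∪ Q ⊆ Icc (0:ℝ) 3 := by
    rintro v (hv | hv)
    · have := hEsub k (hMEsub hv)
      exact ⟨this.1, by linarith [this.2]⟩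
    · have := hFsub k (hMFsub hv)
      simp only [mem_Icc] at this
      constructor
      · linarith [ht.1, this.1]
      · linarith [ht.2, this.2]
  have hmU : volume (ME ∪ Q) ≤ ENNReal.ofReal 3 := by
    refine le_trans (measure_mono hsub3) ?_
    rw [Real.volume_Icc]
    norm_num
  have hkey := measure_union_add_inter (μ := volume) ME hQm
  have hnonempty : (ME ∩ Q).Nonempty := by
    by_contra hne
    rw [not_nonempty_iff_eq_empty] at hne
    rw [hne, measure_empty, add_zero] at hkey
    have hlt : ENNReal.ofReal 3 < volume ME + volume Q := by
      have h3θ : ENNReal.ofReal 3 = θ + θ := by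
        rw [hθdef, ← ENNReal.ofReal_add (by norm_num) (by norm_num)]
        norm_num
      rw [h3θ, hMEvol, hQvol, hMFvol]
      exact ENNReal.add_lt_add hEk hFk
    rw [← hkey] at hlt
    exact absurd (lt_of_lt_of_le hlt hmU) (lt_irrefl _)
  obtain ⟨v, hvME, hvQ⟩ := hnonempty
  have hvE : v ∈ E k := hMEsub hvME
  have hwF : v - t ∈ F k := hMFsub hvQ
  simp only [hEdef, mem_iInter] at hvE
  simp only [hFdef, mem_iInter] at hwF
  obtain ⟨hvIcc, hA⟩ := hvE k le_rfl
  obtain ⟨hwIcc, hB⟩ := hwF k le_rfl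
  rw [show s k + u k + (v - t) = s k + v by rw [htdef]; ring] at hB
  have hbadk := hbad k
  set X := h (s k + v) - h (s k) - c * v with hX
  set Y := h (s k + v) - h (s k + u k) - c * (v - t) with hY
  have hXY : h (s k + u k) - h (s k) - c * u k = X - Y := by
    rw [hX, hY, htdef]; ring
  have habs : |h (s k + u k) - h (s k) - c * u k| ≤ |X| + |Y| := by
    rw [hXY, sub_eq_add_neg]
    exact le_trans (abs_add_le X (-Y)) (by rw [abs_neg])
  linarith [hbadk, hA, hB, habs]


lemma stmt2_ptwise (ρ : ℝ) (W : ℝ → ℝ) (hWpos : ∀ x > 0, 0 < W x)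
    (hWrv : ∀ l > 0, Tendsto (fun x => W (l * x) / W x) atTop (nhds (l ^ (ρ - 1))))
    (v : ℝ) :
    Tendsto (fun σ : ℝ => stmt2h W (σ + v) - stmt2h W σ)
      atTop (nhds ((ρ - 1) * v)) := by
  simp only [stmt2h]
  have h1 : Tendsto (fun x => W (Real.exp v * x) / W x) atTop
      (nhds ((Real.exp v) ^ (ρ - 1))) := hWrv _ (Real.exp_pos v)
  have h2 : Tendsto (fun σ : ℝ => W (Real.exp v * Real.exp σ) / W (Real.exp σ)) atTop
      (nhds ((Real.exp v) ^ (ρ - 1))) := h1.comp Real.tendsto_exp_atTop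
  have hpos : (0:ℝ) < (Real.exp v) ^ (ρ - 1) := Real.rpow_pos_of_pos (Real.exp_pos v) _
  have h3 := ((Real.continuousAt_log hpos.ne').tendsto).comp h2
  rw [Real.log_rpow (Real.exp_pos v), Real.log_exp] at h3
  refine h3.congr fun σ => ?_
  have he : Real.exp v * Real.exp σ = Real.exp (σ + v) := by
    rw [← Real.exp_add]; ring_nf
  show Real.log (W (Real.exp v * Real.exp σ) / W (Real.exp σ)) = _
  rw [he, Real.log_div (hWpos _ (Real.exp_pos _)).ne' (hWpos _ (Real.exp_pos _)).ne']



lemma stmt2_potter (ρ : ℝ) (hρ : ρ < 0) (W : ℝ → ℝ) (hWpos : ∀ x > 0, 0 < W x)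
    (huct : ∀ εp > (0:ℝ), ∃ S : ℝ, 0 ≤ S ∧ ∀ s ≥ S, ∀ u ∈ Icc (0:ℝ) 1,
      |stmt2h W (s + u) - stmt2h W s - (ρ - 1) * u| ≤ εp) :
    ∃ X : ℝ, 1 ≤ X ∧ ∀ x ≥ X, ∀ t ≥ (1:ℝ),
      W (t * x) ≤ Real.exp (-ρ/2) * t ^ (ρ/2 - 1) * W x := by
  set c := ρ - 1 with hc
  set ε := -ρ/2 with hεdef
  have hε : 0 < ε := by rw [hεdef]; linarith
  obtain ⟨S, hS0, hS⟩ := huct ε hε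
  set h := stmt2h W with hhdef
  -- iterated bound
  have claim : ∀ n : ℕ, ∀ u : ℝ, 0 ≤ u → u ≤ n → ∀ s ≥ S,
      h (s + u) - h s ≤ (c + ε) * u + ε := by
    intro n
    induction n with
    | zero =>
      intro u hu0 hun s hs
      have : u = 0 := le_antisymm (by exact_mod_cast hun) hu0
      subst this
      rw [add_zero]
      simp
      nlinarith
    | succ n ih =>
      intro u hu0 hun s hs
      rcases le_or_gt u 1 with hu1 | hu1
      · have := hS s hs u ⟨hu0, hu1⟩
        have h1 : h (s + u) - h s ≤ c * u + ε := by
          have := abs_le.mp this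
          linarith [this.2]
        nlinarith [mul_nonneg hε.le hu0]
      · have hstep := hS s hs 1 ⟨zero_le_one, le_refl 1⟩
        have h1 : h (s + 1) - h s ≤ c + ε := by
          have := abs_le.mp hstep
          linarith [this.2]
        have h2 : h ((s + 1) + (u - 1)) - h (s + 1) ≤ (c + ε) * (u - 1) + ε := by
          apply ih (u - 1) (by linarith) ?_ (s + 1) (by linarith)
          push_cast at hun ⊢
          linarith
        rw [show s + 1 + (u - 1) = s + u by ring] at h2
        nlinarith
  refine ⟨Real.exp S, Real.one_le_exp hS0, fun x hx t ht => ?_⟩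
  have hx0 : (0:ℝ) < x := lt_of_lt_of_le (Real.exp_pos S) hx
  have ht0 : (0:ℝ) < t := lt_of_lt_of_le one_pos ht
  set s := Real.log x with hsdef
  set u := Real.log t with hudef
  have hsS : s ≥ S := by
    rw [hsdef, ge_iff_le, Real.le_log_iff_exp_le hx0]
    exact hx
  have hu0 : 0 ≤ u := Real.log_nonneg ht
  have hun : u ≤ (⌈u⌉₊ : ℝ) := Nat.le_ceil u
  have hkey := claim ⌈u⌉₊ u hu0 hun s hsS
  have hexp : Real.exp (s + u) = t * x := by
    rw [Real.exp_add, hsdef, hudef, Real.exp_log hx0, Real.exp_log ht0]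
    ring
  have hexps : Real.exp s = x := by rw [hsdef, Real.exp_log hx0]
  have htx0 : 0 < t * x := mul_pos ht0 hx0
  have hW1 : W (t * x) = Real.exp (h (s + u)) := by
    rw [hhdef]
    show W (t * x) = Real.exp (Real.log (W (Real.exp (s + u))))
    rw [hexp, Real.exp_log (hWpos _ htx0)]
  have hW2 : W x = Real.exp (h s) := by
    rw [hhdef]
    show W x = Real.exp (Real.log (W (Real.exp s)))
    rw [hexps, Real.exp_log (hWpos _ hx0)]
  have hrpow : t ^ (ρ/2 - 1) = Real.exp ((c + ε) * u) := by
    rw [Real.rpow_def_of_pos ht0, hudef]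
    congr 1
    rw [hc, hεdef]
    ring
  rw [hW1, hW2, hrpow, ← Real.exp_add, ← Real.exp_add]
  apply Real.exp_le_exp.mpr
  have : h (s + u) ≤ h s + ((c + ε) * u + ε) := by linarith
  rw [hεdef] at *
  linarith


lemma stmt2_main
    (ρ : ℝ) (hρ : ρ < 0)
    (W : ℝ → ℝ) (hWpos : ∀ x > 0, 0 < W x)
    (hWrv : ∀ l > 0,
      Tendsto (fun x => W (l * x) / W x) atTop (nhds (l ^ (ρ - 1))))
    (hWint : IntegrableOn W (Set.Ici 1) MeasureTheory.volume)
    (hpotter : ∃ X : ℝ, 1 ≤ X ∧ ∀ x ≥ X, ∀ t ≥ (1:ℝ),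
      W (t * x) ≤ Real.exp (-ρ/2) * t ^ (ρ/2 - 1) * W x) :
    Tendsto (fun x => (∫ u in Set.Ioi x, W u) / ((1 / |ρ|) * x * W x))
      atTop (nhds 1) := by
  obtain ⟨X, hX1, hX⟩ := hpotter
  -- measurable version of W
  obtain ⟨W₀, hW₀m, haeW⟩ : ∃ g : ℝ → ℝ, Measurable g ∧
      W =ᵐ[volume.restrict (Ici 1)] g :=
    ⟨_, (hWint.aestronglyMeasurable).measurable_mk, (hWint.aestronglyMeasurable).ae_eq_mk⟩
  obtain ⟨N, hNsub, hNnull⟩ : ∃ N : Set ℝ,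
      ({y : ℝ | W y ≠ W₀ y} ∩ Ici 1 ⊆ N) ∧ volume N = 0 := by
    refine ⟨{y | W y ≠ W₀ y} ∩ Ici 1, Subset.rfl, ?_⟩
    have h0 : (volume.restrict (Ici 1)) {y | ¬ W y = W₀ y} = 0 := ae_iff.mp haeW
    rwa [Measure.restrict_apply' measurableSet_Ici] at h0
  have hσlt : ρ/2 - 1 < -1 := by linarith
  -- DCT
  have hK : Tendsto (fun x => ∫ t in Ioi (1:ℝ), W (t * x) / W x) atTop
      (nhds (∫ t in Ioi (1:ℝ), t ^ (ρ - 1))) := by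
    apply MeasureTheory.tendsto_integral_filter_of_dominated_convergence
      (μ := volume.restrict (Ioi 1)) (F := fun (x : ℝ) (t : ℝ) => W (t * x) / W x)
      (f := fun t : ℝ => t ^ (ρ - 1)) (l := atTop)
      (bound := fun t => Real.exp (-ρ/2) * t ^ (ρ/2 - 1))
    · -- measurability, eventually
      filter_upwards [eventually_ge_atTop (1:ℝ)] with x hx1
      have hx0 : (0:ℝ) < x := lt_of_lt_of_le one_pos hx1
      have hmeas : AEStronglyMeasurable (fun t => W₀ (t * x)) (volume.restrict (Ioi 1)) :=
        (hW₀m.comp (measurable_mul_const x)).aestronglyMeasurable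
      have heq : (fun t => W₀ (t * x)) =ᵐ[volume.restrict (Ioi 1)] (fun t => W (t * x)) := by
        apply ae_iff.mpr
        rw [Measure.restrict_apply' measurableSet_Ioi]
        have hsubN : {t : ℝ | ¬ W₀ (t * x) = W (t * x)} ∩ Ioi 1 ⊆
            (fun t : ℝ => t * x) ⁻¹' N := by
          rintro t ⟨hne, ht⟩
          have ht1 : (1:ℝ) < t := ht
          refine hNsub ⟨fun hc => hne hc.symm, ?_⟩
          have : (1:ℝ) * 1 ≤ t * x := by nlinarith
          simpa using this
        refine measure_mono_null hsubN ?_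
        rw [Real.volume_preimage_mul_right hx0.ne' N, hNnull, mul_zero]
      have h2 : AEStronglyMeasurable (fun t => W (t * x)) (volume.restrict (Ioi 1)) :=
        hmeas.congr heq
      exact (h2.mul aestronglyMeasurable_const).congr
        (Eventually.of_forall fun t => (div_eq_mul_inv (W (t * x)) (W x)).symm)
    · -- bound
      filter_upwards [eventually_ge_atTop X, eventually_ge_atTop (1:ℝ)] with x hxX hx1
      apply (ae_restrict_iff' measurableSet_Ioi).mpr
      apply Eventually.of_forall
      intro t ht
      have ht1 : (1:ℝ) ≤ t := le_of_lt ht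
      have ht0 : (0:ℝ) < t := lt_of_lt_of_le one_pos ht1
      have hx0 : (0:ℝ) < x := lt_of_lt_of_le one_pos hx1
      have hWx : 0 < W x := hWpos x hx0
      have hWtx : 0 < W (t * x) := hWpos _ (mul_pos ht0 hx0)
      rw [Real.norm_eq_abs, abs_of_pos (div_pos hWtx hWx), div_le_iff₀ hWx]
      exact hX x hxX t ht1
    · -- bound integrable
      exact (integrableOn_Ioi_rpow_of_lt hσlt one_pos).const_mul _
    · -- pointwise limit
      apply (ae_restrict_iff' measurableSet_Ioi).mpr
      apply Eventually.of_forall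
      intro t ht
      exact hWrv t (lt_trans one_pos ht)
  -- value of limit integral
  have hval : (∫ t in Ioi (1:ℝ), t ^ (ρ - 1)) = -1/ρ := by
    rw [integral_Ioi_rpow_of_lt (by linarith) one_pos,
      show ρ - 1 + 1 = ρ by ring, Real.one_rpow]
  rw [hval] at hK
  -- identity: ∫ u in Ioi x, W u = x * ∫ t in Ioi 1, W (t * x)
  have hident : ∀ x : ℝ, 0 < x →
      (∫ u in Ioi x, W u) = x * ∫ t in Ioi (1:ℝ), W (t * x) := by
    intro x hx0
    have := integral_comp_mul_right_Ioi W 1 hx0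
    rw [one_mul] at this
    rw [this]
    simp only [smul_eq_mul]
    rw [← mul_assoc, mul_inv_cancel₀ hx0.ne', one_mul]
  -- final
  have hfinal : Tendsto (fun x => |ρ| * ∫ t in Ioi (1:ℝ), W (t * x) / W x) atTop
      (nhds 1) := by
    have := hK.const_mul |ρ|
    have habs : |ρ| * (-1/ρ) = 1 := by
      rw [abs_of_neg hρ]
      field_simp
      exact div_self hρ.ne
    rwa [habs] at this
  apply hfinal.congr'
  filter_upwards [eventually_ge_atTop X, eventually_ge_atTop (1:ℝ)] with x hxX hx1
  have hx0 : (0:ℝ) < x := lt_of_lt_of_le one_pos hx1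
  have hWx : 0 < W x := hWpos x hx0
  have hρne : |ρ| ≠ 0 := abs_ne_zero.mpr hρ.ne
  rw [hident x hx0, integral_div]
  field_simp
  ring
  congr 1; ext t; rw [mul_comm]


/-- for ρ < 0 and W regularly varying at infinity with index ρ-1,
∫ₓ^∞ W(u) du ∼ (1/|ρ|) x W(x) as x → ∞. -/
theorem stmt2
    (ρ : ℝ) (hρ : ρ < 0)
    (W : ℝ → ℝ) (hWpos : ∀ x > 0, 0 < W x)
    (hWrv : ∀ l > 0,
      Tendsto (fun x => W (l * x) / W x) atTop (nhds (l ^ (ρ - 1))))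
    (hWint : IntegrableOn W (Set.Ici 1) MeasureTheory.volume) :
    Tendsto (fun x => (∫ u in Set.Ioi x, W u) / ((1 / |ρ|) * x * W x))
      atTop (nhds 1) := by
  have hptw := stmt2_ptwise ρ W hWpos hWrv
  have huct : ∀ εp > (0:ℝ), ∃ S : ℝ, 0 ≤ S ∧ ∀ s ≥ S, ∀ u ∈ Icc (0:ℝ) 1,
      |stmt2h W (s + u) - stmt2h W s - (ρ - 1) * u| ≤ εp :=
    fun εp hεp => stmt2_uct ρ W hWpos hWrv hWint hptw hεp
  have hpotter := stmt2_potter ρ hρ W hWpos huct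
  exact stmt2_main ρ hρ W hWpos hWrv hWint hpotter
end

section
/- Let h* : (0,∞) → (0,∞) be differentiable with h*(s) → m_∞ ∈ (0,∞) as s → 0⁺, and let m : (0,∞) → (0,∞) be increasing, differentiable, with m(x) → m_∞ as x → ∞. Suppose -(h*)'(s) ∼ -(d/ds) m(1/√s) as s → 0⁺. Then 1/h*(s) - 1/m_∞ ∼ (1/m_∞²)(m_∞ - m(1/√s)) as s → 0⁺. -/
open Filter Set

/-- the de l'Hospital computation in the proof of Theorem 4. -/
theorem stmt9
    (hstar m : ℝ → ℝ) (minf : ℝ) (hminf : 0 < minf)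
    (hstarpos : ∀ s > 0, 0 < hstar s)
    (hmpos : ∀ x > 0, 0 < m x)
    (hstardiff : Differentiable ℝ hstar)
    (hmdiff : Differentiable ℝ m)
    (hmincr : StrictMono m)
    (hstarlim : Tendsto hstar (nhdsWithin 0 (Set.Ioi 0)) (nhds minf))
    (hmlim : Tendsto m atTop (nhds minf))
    (hderiv : Tendsto
      (fun s => (-(deriv hstar s)) /
        (-(deriv (fun s => m (1 / Real.sqrt s)) s)))
      (nhdsWithin 0 (Set.Ioi 0)) (nhds 1)) :
    Tendsto
      (fun s => (1 / hstar s - 1 / minf) /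
        ((1 / minf ^ 2) * (minf - m (1 / Real.sqrt s))))
      (nhdsWithin 0 (Set.Ioi 0)) (nhds 1) := by
  set φ : ℝ → ℝ := fun s => m (1 / Real.sqrt s) with hφ
  set f : ℝ → ℝ := fun s => minf - hstar s with hf
  set g : ℝ → ℝ := fun s => minf - φ s with hg
  have hmem : ∀ᶠ s in nhdsWithin (0:ℝ) (Set.Ioi 0), s ∈ Set.Ioi (0:ℝ) :=
    eventually_mem_nhdsWithin
  -- derivative facts on Ioi 0
  have hφdiff : ∀ s : ℝ, 0 < s → DifferentiableAt ℝ φ s := by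
    intro s hs
    have h1 : DifferentiableAt ℝ (fun s : ℝ => 1 / Real.sqrt s) s := by
      have := (Real.hasDerivAt_sqrt (ne_of_gt hs)).differentiableAt
      simp only [one_div]; exact this.inv (Real.sqrt_ne_zero'.2 hs)
    exact (hmdiff _).comp s h1
  have hderivg : ∀ s : ℝ, 0 < s → deriv g s = -(deriv φ s) := by
    intro s hs
    simp [hg, deriv_const_sub]
  have hderivf : ∀ s : ℝ, deriv f s = -(deriv hstar s) := by
    intro s
    simp [hf, deriv_const_sub]
  -- eventual nonvanishing of deriv g, from hderiv tending to 1
  have hquot : ∀ᶠ s in nhdsWithin (0:ℝ) (Set.Ioi 0),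
      (-(deriv hstar s)) / (-(deriv φ s)) ≠ 0 := by
    have := hderiv.eventually_ne one_ne_zero
    exact this
  have hg' : ∀ᶠ s in nhdsWithin (0:ℝ) (Set.Ioi 0), deriv g s ≠ 0 := by
    filter_upwards [hquot, hmem] with s hq hs
    rw [hderivg s hs]
    intro h
    rw [h] at hq
    simp at hq
  have hfa : Tendsto f (nhdsWithin 0 (Set.Ioi 0)) (nhds 0) := by
    have := hstarlim.const_sub minf
    simpa using this
  have hφlim : Tendsto φ (nhdsWithin 0 (Set.Ioi 0)) (nhds minf) := by
    apply hmlim.comp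
    have h1 : Tendsto (fun s : ℝ => Real.sqrt s) (nhdsWithin 0 (Set.Ioi 0))
        (nhdsWithin 0 (Set.Ioi 0)) := by
      apply tendsto_nhdsWithin_of_tendsto_nhds_of_eventually_within
      · simpa using (Real.continuous_sqrt.tendsto 0).mono_left nhdsWithin_le_nhds
      · filter_upwards [hmem] with s hs
        exact Real.sqrt_pos.2 hs
    have h2 : Tendsto (fun x : ℝ => 1 / x) (nhdsWithin 0 (Set.Ioi 0)) atTop := by
      simpa [one_div] using tendsto_inv_nhdsGT_zero
    exact h2.comp h1
  have hga : Tendsto g (nhdsWithin 0 (Set.Ioi 0)) (nhds 0) := by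
    have := hφlim.const_sub minf
    simpa using this
  have hdiv : Tendsto (fun s => deriv f s / deriv g s)
      (nhdsWithin 0 (Set.Ioi 0)) (nhds 1) := by
    apply hderiv.congr'
    filter_upwards [hmem] with s hs
    rw [hderivf s, hderivg s hs]
  have hdf : ∀ᶠ s in nhdsWithin (0:ℝ) (Set.Ioi 0), DifferentiableAt ℝ f s := by
    filter_upwards [hmem] with s _
    exact (differentiable_const _).sub hstardiff |>.differentiableAt
  have hlhop : Tendsto (fun s => f s / g s) (nhdsWithin 0 (Set.Ioi 0)) (nhds 1) :=
    deriv.lhopital_zero_nhdsGT hdf hg' hfa hga hdiv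
  -- m∞ / hstar s → 1
  have hratio : Tendsto (fun s => minf / hstar s) (nhdsWithin 0 (Set.Ioi 0)) (nhds 1) := by
    have := (tendsto_const_nhds (x := minf)
      (f := nhdsWithin (0:ℝ) (Set.Ioi 0))).div hstarlim (ne_of_gt hminf)
    rw [div_self (ne_of_gt hminf)] at this; exact this
  have hmul := hlhop.mul hratio
  rw [mul_one] at hmul
  apply hmul.congr'
  filter_upwards [hmem] with s hs
  have hh : hstar s ≠ 0 := ne_of_gt (hstarpos s hs)
  have hm : minf ≠ 0 := ne_of_gt hminf
  by_cases hzero : minf - φ s = 0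
  · have h0 : minf - m (1 / Real.sqrt s) = 0 := hzero
    simp only [hf, hg]
    rw [hzero]
    simp
  · field_simp [hf, hg]
    ring
end

section
/- (Example 2 asymptotics) Let 0 < β < 1, α ≠ 0, and for x > 1 let W(x) = exp(∫₁ˣ (-1/u + α/(u (log u)^β)) du) = (1/x) exp(α (log x)^{1-β}/(1-β)). Then m(x) = 2∫₁ˣ W(u) du + C satisfies: if α > 0, m(x) ∼ (2/α)(log x)^β exp(α(log x)^{1-β}/(1-β)) as x → ∞; in particular 1/m(√t) ∼ (α/2)(log √t)^{-β} exp(-α(log √t)^{1-β}/(1-β)) as t → ∞. -/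
open Filter Set MeasureTheory

noncomputable def Wf (α β : ℝ) (x : ℝ) : ℝ :=
  (1 / x) * Real.exp (α * Real.log x ^ (1 - β) / (1 - β))

noncomputable def hfun (α β : ℝ) (x : ℝ) : ℝ :=
  (1 / α) * Real.log x ^ β * Real.exp (α * Real.log x ^ (1 - β) / (1 - β))

lemma Wf_contOn (α β : ℝ) (hβ1 : β < 1) : ContinuousOn (Wf α β) (Ici 1) := by
  have h0 : ∀ x ∈ Ici (1:ℝ), x ≠ 0 := fun x hx => by
    have : (1:ℝ) ≤ x := hx
    positivity
  apply ContinuousOn.mul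
  · exact continuousOn_const.div continuousOn_id h0
  · apply Real.continuous_exp.comp_continuousOn
    apply ContinuousOn.div_const
    apply ContinuousOn.mul continuousOn_const
    apply ContinuousOn.rpow_const (Real.continuousOn_log.mono h0)
    intro x _; right; linarith

lemma hfun_pos (α β : ℝ) (hα : 0 < α) {x : ℝ} (hx : 1 < x) : 0 < hfun α β x := by
  have hL : 0 < Real.log x := Real.log_pos hx
  have := Real.rpow_pos_of_pos hL β
  have := Real.exp_pos (α * Real.log x ^ (1 - β) / (1 - β))
  unfold hfun; positivity

lemma hfun_tendsto (α β : ℝ) (hα : 0 < α) (hβ0 : 0 < β) (hβ1 : β < 1) :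
    Tendsto (hfun α β) atTop atTop := by
  have hL : Tendsto Real.log atTop atTop := Real.tendsto_log_atTop
  have h1 : Tendsto (fun x => Real.log x ^ β) atTop atTop :=
    (tendsto_rpow_atTop hβ0).comp hL
  have h2 : Tendsto (fun x => Real.exp (α * Real.log x ^ (1 - β) / (1 - β)))
      atTop atTop := by
    apply Real.tendsto_exp_atTop.comp
    have h3 : Tendsto (fun x : ℝ => α / (1 - β) * Real.log x ^ (1 - β)) atTop atTop :=
      (((tendsto_rpow_atTop (by linarith : (0:ℝ) < 1 - β)).comp hL).const_mul_atTop
        (div_pos hα (by linarith)))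
    exact h3.congr (fun x => by ring)
  have := (h1.atTop_mul_atTop₀ h2).const_mul_atTop
    (by positivity : (0:ℝ) < 1 / α)
  exact this.congr (fun x => by simp only [hfun]; ring)

lemma eps_tendsto (α β : ℝ) (hβ1 : β < 1) :
    Tendsto (fun x => (β / α) * Real.log x ^ (β - 1)) atTop (nhds 0) := by
  have h1 : Tendsto (fun x : ℝ => Real.log x ^ (-(1 - β))) atTop (nhds 0) :=
    (tendsto_rpow_neg_atTop (by linarith : (0:ℝ) < 1 - β)).comp Real.tendsto_log_atTop
  have := h1.const_mul (β / α)
  rw [mul_zero] at this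
  exact this.congr (fun x => by norm_num)

lemma hfun_deriv (α β : ℝ) (hα : α ≠ 0) (hβ1 : β < 1) {x : ℝ} (hx : 1 < x) :
    HasDerivAt (hfun α β)
      (Wf α β x * (1 + (β / α) * Real.log x ^ (β - 1))) x := by
  have hx0 : x ≠ 0 := by positivity
  have hL : 0 < Real.log x := Real.log_pos hx
  have hβ' : (1 : ℝ) - β ≠ 0 := by linarith
  have hlog : HasDerivAt Real.log x⁻¹ x := Real.hasDerivAt_log hx0
  have h1 : HasDerivAt (fun y => Real.log y ^ β)
      (x⁻¹ * β * Real.log x ^ (β - 1)) x :=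
    hlog.rpow_const (Or.inl hL.ne')
  have h2 : HasDerivAt (fun y => Real.exp (α * Real.log y ^ (1 - β) / (1 - β)))
      (Real.exp (α * Real.log x ^ (1 - β) / (1 - β)) *
        (α * (x⁻¹ * (1 - β) * Real.log x ^ (-β)) / (1 - β))) x := by
    have h0 : HasDerivAt (fun y => Real.log y ^ (1 - β))
        (x⁻¹ * (1 - β) * Real.log x ^ (1 - β - 1)) x :=
      hlog.rpow_const (Or.inl hL.ne')
    have := ((h0.const_mul α).div_const (1 - β)).exp
    rw [show (1 - β - 1 : ℝ) = -β by ring] at this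
    exact this
  have hd := ((h1.mul h2).const_mul (1 / α))
  have hfe : hfun α β = (fun y => 1 / α * ((fun y => Real.log y ^ β) *
      fun y => Real.exp (α * Real.log y ^ (1 - β) / (1 - β))) y) := by
    funext y; simp [hfun]; ring
  rw [hfe]
  refine hd.congr_deriv ?_
  symm
  set L := Real.log x
  set E := Real.exp (α * L ^ (1 - β) / (1 - β)) with hE
  have e1 : L ^ β * L ^ (-β) = 1 := by
    rw [← Real.rpow_add hL]; norm_num
  have key : L ^ β * (E * (α * (x⁻¹ * (1 - β) * L ^ (-β)) / (1 - β)))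
      = E * α * x⁻¹ := by
    have : L ^ β * (E * (α * (x⁻¹ * (1 - β) * L ^ (-β)) / (1 - β)))
        = E * α * x⁻¹ * (L ^ β * L ^ (-β)) * ((1 - β) / (1 - β)) := by ring
    rw [this, e1, div_self hβ']; ring
  rw [key]
  show (1 / x) * E * (1 + (β / α) * L ^ (β - 1)) = _
  field_simp
  ring

section main
variable {α β : ℝ} {W : ℝ → ℝ}

lemma W_intble (hβ1 : β < 1) (hW : ∀ x > 1, W x = Wf α β x)
    {a b : ℝ} (ha : 1 ≤ a) (hab : a ≤ b) :
    IntervalIntegrable W volume a b := by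
  rw [intervalIntegrable_iff, uIoc_of_le hab]
  have hWf : IntegrableOn (Wf α β) (Ioc a b) volume := by
    apply ContinuousOn.integrableOn_compact isCompact_Icc
      ((Wf_contOn α β hβ1).mono ?_) |>.mono_set Ioc_subset_Icc_self
    intro x hx; exact le_trans ha hx.1
  exact hWf.congr_fun (fun u hu => (hW u (lt_of_le_of_lt ha hu.1)).symm) measurableSet_Ioc

lemma D_intble (hβ1 : β < 1) {a b : ℝ} (ha : 1 < a) (hab : a ≤ b) :
    IntervalIntegrable
      (fun u => Wf α β u * (1 + (β / α) * Real.log u ^ (β - 1))) volume a b := by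
  apply ContinuousOn.intervalIntegrable
  rw [uIcc_of_le hab]
  have hsub : Icc a b ⊆ Ici 1 := fun x hx => le_of_lt (lt_of_lt_of_le ha hx.1)
  apply ((Wf_contOn α β hβ1).mono hsub).mul
  apply continuousOn_const.add (continuousOn_const.mul ?_)
  apply ContinuousOn.rpow_const
  · apply Real.continuousOn_log.mono
    intro x hx
    have : 1 < x := lt_of_lt_of_le ha hx.1
    simp only [mem_compl_iff, mem_singleton_iff]
    positivity
  · intro x hx
    left
    exact (Real.log_pos (lt_of_lt_of_le ha hx.1)).ne'

lemma main_tendsto (hα : 0 < α) (hβ0 : 0 < β) (hβ1 : β < 1)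
    (hW : ∀ x > 1, W x = Wf α β x) :
    Tendsto (fun x => (∫ u in (1:ℝ)..x, W u) / hfun α β x) atTop (nhds 1) := by
  set φ : ℝ → ℝ := fun x => ∫ u in (1:ℝ)..x, W u with hφ
  set h := hfun α β
  -- basic split of the integral
  have hsplit : ∀ x₀ x : ℝ, 1 < x₀ → x₀ ≤ x →
      ∫ u in x₀..x, W u = φ x - φ x₀ := by
    intro x₀ x hx₀ hx
    have h1 := W_intble hβ1 hW le_rfl hx₀.le
    have h2 := W_intble hβ1 hW hx₀.le hx
    have := intervalIntegral.integral_add_adjacent_intervals h1 h2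
    simp only [hφ]
    linarith [this]
  -- FTC for D
  have hftc : ∀ x₀ x : ℝ, 1 < x₀ → x₀ ≤ x →
      ∫ u in x₀..x, Wf α β u * (1 + (β / α) * Real.log u ^ (β - 1))
        = h x - h x₀ := by
    intro x₀ x hx₀ hx
    apply intervalIntegral.integral_eq_sub_of_hasDerivAt
    · intro u hu
      rw [uIcc_of_le hx] at hu
      exact hfun_deriv α β hα.ne' hβ1 (lt_of_lt_of_le hx₀ hu.1)
    · exact D_intble hβ1 hx₀ hx
  -- pointwise bound: W ≤ D on (1, ∞)
  have hWD : ∀ u : ℝ, 1 < u →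
      W u ≤ Wf α β u * (1 + (β / α) * Real.log u ^ (β - 1)) := by
    intro u hu
    rw [hW u hu]
    have hu0 : (0:ℝ) < u := by linarith
    have hWf0 : 0 ≤ Wf α β u := by
      unfold Wf
      positivity
    have hL : 0 < Real.log u := Real.log_pos hu
    have h2 : 0 < Real.log u ^ (β - 1) := Real.rpow_pos_of_pos hL _
    nlinarith [mul_nonneg hWf0 (le_of_lt (mul_pos (div_pos hβ0 hα) h2))]
  -- upper estimate with x₀ = 2
  have hup : ∀ x : ℝ, 2 ≤ x → φ x ≤ φ 2 + (h x - h 2) := by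
    intro x hx
    have e1 := hsplit 2 x one_lt_two hx
    have e2 := hftc 2 x one_lt_two hx
    have hmono : ∫ u in (2:ℝ)..x, W u ≤
        ∫ u in (2:ℝ)..x, Wf α β u * (1 + (β / α) * Real.log u ^ (β - 1)) := by
      apply intervalIntegral.integral_mono_on hx (W_intble hβ1 hW one_le_two hx)
        (D_intble hβ1 one_lt_two hx)
      intro u hu
      exact hWD u (lt_of_lt_of_le one_lt_two hu.1)
    rw [e1, e2] at hmono
    linarith
  have hh := hfun_tendsto α β hα hβ0 hβ1
  rw [tendsto_order]
  constructor
  · -- lower bound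
    intro a ha
    set δ : ℝ := (1 - a) / 2 with hδ
    have hδ0 : 0 < δ := by simp only [hδ]; linarith
    have h1δ : (0:ℝ) < 1 + δ := by linarith
    have hainv : a < 1 / (1 + δ) := by
      rw [lt_div_iff₀ h1δ]
      nlinarith
    -- choose x₀
    have hev : ∀ᶠ u in atTop, (β / α) * Real.log u ^ (β - 1) ≤ δ :=
      (eps_tendsto α β hβ1).eventually_le_const hδ0
    obtain ⟨x₀', hx₀'⟩ := hev.exists_forall_of_atTop
    set x₀ : ℝ := max x₀' 2 with hx₀def
    have hx₀1 : 1 < x₀ := lt_of_lt_of_le one_lt_two (le_max_right _ _)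
    have hεle : ∀ u : ℝ, x₀ ≤ u → (β / α) * Real.log u ^ (β - 1) ≤ δ :=
      fun u hu => hx₀' u (le_trans (le_max_left _ _) hu)
    -- for x ≥ x₀ : h x - h x₀ ≤ (1+δ)(φ x - φ x₀)
    have hkey : ∀ x : ℝ, x₀ ≤ x → h x - h x₀ ≤ (1 + δ) * (φ x - φ x₀) := by
      intro x hx
      have e1 := hsplit x₀ x hx₀1 hx
      have e2 := hftc x₀ x hx₀1 hx
      have hmono : ∫ u in x₀..x, Wf α β u * (1 + (β / α) * Real.log u ^ (β - 1)) ≤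
          ∫ u in x₀..x, (1 + δ) * W u := by
        apply intervalIntegral.integral_mono_on hx (D_intble hβ1 hx₀1 hx)
          ((W_intble hβ1 hW hx₀1.le hx).const_mul _)
        intro u hu
        have hu1 : 1 < u := lt_of_lt_of_le hx₀1 hu.1
        rw [hW u hu1]
        have hu0 : (0:ℝ) < u := by linarith
        have hWf0 : 0 ≤ Wf α β u := by unfold Wf; positivity
        have := hεle u hu.1
        nlinarith
      rw [e2] at hmono
      rw [intervalIntegral.integral_const_mul, e1] at hmono
      linarith
    -- lower bound function tends to 1/(1+δ) > a
    have hlow : Tendsto (fun x => (φ x₀ - h x₀ / (1 + δ)) / h x + 1 / (1 + δ))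
        atTop (nhds (1 / (1 + δ))) := by
      have : Tendsto (fun x => (φ x₀ - h x₀ / (1 + δ)) / h x) atTop (nhds 0) := by
        simp only [div_eq_mul_inv]
        have := hh.inv_tendsto_atTop.const_mul (φ x₀ - h x₀ * (1 + δ)⁻¹)
        rw [mul_zero] at this
        exact this
      have := this.add_const (1 / (1 + δ))
      rw [zero_add] at this
      exact this
    have hev2 : ∀ᶠ x in atTop,
        a < (φ x₀ - h x₀ / (1 + δ)) / h x + 1 / (1 + δ) :=
      hlow.eventually_const_lt hainv
    filter_upwards [hev2, eventually_ge_atTop x₀, eventually_gt_atTop (1:ℝ)]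
      with x hx1 hx2 hx3
    have hhx : 0 < h x := hfun_pos α β hα hx3
    have hφx : φ x₀ + (h x - h x₀) / (1 + δ) ≤ φ x := by
      have h2 : (h x - h x₀) / (1 + δ) ≤ φ x - φ x₀ := by
        rw [div_le_iff₀ h1δ]
        nlinarith [hkey x hx2]
      linarith
    calc a < (φ x₀ - h x₀ / (1 + δ)) / h x + 1 / (1 + δ) := hx1
      _ = (φ x₀ + (h x - h x₀) / (1 + δ)) / h x := by
          field_simp
          ring
      _ ≤ φ x / h x := by gcongr
  · -- upper bound
    intro a ha
    have hupf : Tendsto (fun x => (φ 2 - h 2) / h x + 1) atTop (nhds 1) := by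
      have : Tendsto (fun x => (φ 2 - h 2) / h x) atTop (nhds 0) := by
        simp only [div_eq_mul_inv]
        have := hh.inv_tendsto_atTop.const_mul (φ 2 - h 2)
        rw [mul_zero] at this
        exact this
      have := this.add_const 1
      rw [zero_add] at this
      exact this
    have hev2 : ∀ᶠ x in atTop, (φ 2 - h 2) / h x + 1 < a :=
      hupf.eventually_lt_const ha
    filter_upwards [hev2, eventually_ge_atTop (2:ℝ)] with x hx1 hx2
    have hx3 : (1:ℝ) < x := lt_of_lt_of_le one_lt_two hx2
    have hhx : 0 < h x := hfun_pos α β hα hx3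
    calc φ x / h x ≤ (φ 2 + (h x - h 2)) / h x := by
          gcongr
          exact hup x hx2
      _ = (φ 2 - h 2) / h x + 1 := by field_simp; ring
      _ < a := hx1
end main

/-- Example 2, case α > 0: with
W(x) = (1/x) exp(α (log x)^{1-β}/(1-β)) for x > 1 and m(x) = 2∫₁ˣ W + C,
m(x) ∼ (2/α)(log x)^β exp(α(log x)^{1-β}/(1-β)), hence
1/m(√t) ∼ (α/2)(log √t)^{-β} exp(-α(log √t)^{1-β}/(1-β)). -/
theorem stmt12
    (α β C : ℝ) (hα : 0 < α) (hβ0 : 0 < β) (hβ1 : β < 1)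
    (W : ℝ → ℝ)
    (hW : ∀ x > 1, W x =
      (1 / x) * Real.exp (α * Real.log x ^ (1 - β) / (1 - β)))
    (m : ℝ → ℝ)
    (hm : ∀ x, m x = 2 * (∫ u in (1:ℝ)..x, W u) + C) :
    Tendsto (fun x => m x /
        ((2 / α) * Real.log x ^ β *
          Real.exp (α * Real.log x ^ (1 - β) / (1 - β))))
      atTop (nhds 1) ∧
    Tendsto (fun t => (1 / m (Real.sqrt t)) /
        ((α / 2) * Real.log (Real.sqrt t) ^ (-β) *
          Real.exp (-(α * Real.log (Real.sqrt t) ^ (1 - β) / (1 - β)))))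
      atTop (nhds 1) := by
  have hmain := main_tendsto hα hβ0 hβ1 (W := W) (fun x hx => hW x hx)
  have part1 : Tendsto (fun x => m x /
      ((2 / α) * Real.log x ^ β *
        Real.exp (α * Real.log x ^ (1 - β) / (1 - β)))) atTop (nhds 1) := by
    have h2 : Tendsto (fun x => (C / 2) / hfun α β x) atTop (nhds 0) := by
      simp only [div_eq_mul_inv]
      have := (hfun_tendsto α β hα hβ0 hβ1).inv_tendsto_atTop.const_mul (C * 2⁻¹)
      rw [mul_zero] at this
      exact this
    have h3 := hmain.add h2
    rw [add_zero] at h3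
    apply h3.congr'
    filter_upwards [eventually_gt_atTop (1:ℝ)] with x hx
    have hhx : 0 < hfun α β x := hfun_pos α β hα hx
    have hden : (2 / α) * Real.log x ^ β *
        Real.exp (α * Real.log x ^ (1 - β) / (1 - β)) = 2 * hfun α β x := by
      unfold hfun; ring
    rw [hm x, hden]
    field_simp
  refine ⟨part1, ?_⟩
  have hsq : Tendsto Real.sqrt atTop atTop := by
    apply (tendsto_rpow_atTop (by norm_num : (0:ℝ) < 1/2)).congr'
    filter_upwards with x
    rw [Real.sqrt_eq_rpow]
  have part2 := ((part1.comp hsq).inv₀ one_ne_zero)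
  rw [inv_one] at part2
  apply part2.congr'
  filter_upwards [hsq.eventually (eventually_gt_atTop (1:ℝ))] with t ht
  have hL : 0 < Real.log (Real.sqrt t) := Real.log_pos ht
  set L := Real.log (Real.sqrt t) with hLdef
  set E := Real.exp (α * L ^ (1 - β) / (1 - β)) with hEdef
  have hLβ : (0:ℝ) < L ^ β := Real.rpow_pos_of_pos hL β
  have hinv : (α / 2) * L ^ (-β) * Real.exp (-(α * L ^ (1 - β) / (1 - β)))
      = ((2 / α) * L ^ β * E)⁻¹ := by
    rw [Real.rpow_neg hL.le, Real.exp_neg, ← hEdef]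
    field_simp
  show (m (Real.sqrt t) / ((2 / α) * L ^ β * E))⁻¹
      = (1 / m (Real.sqrt t)) / ((α / 2) * L ^ (-β) * Real.exp (-(α * L ^ (1 - β) / (1 - β))))
  rw [hinv, inv_div, div_eq_mul_inv, div_eq_mul_inv (1 / m (Real.sqrt t)), inv_inv, one_div]
  ring
end
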